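/- With Δ(μ,ν;x) given by the closed product formula above, the Rotation identity holds: Δ(yμ, yν; x)(y·τ) = Δ(μ,ν;y)(τ)^{-1} · Δ(μ,ν;xy)(τ) for all integral weights μ, ν, all x, y ∈ W, and generic τ (where y·τ = y(τ+ρ)−ρ). -/
import Mathlib


/-!
STATEMENT 10 (Rotation identity): with Δ given by the closed product formula
(c = 1), Δ(yμ,yν;x)(y·τ) = Δ(μ,ν;y)(τ)⁻¹ · Δ(μ,ν;xy)(τ) for generic τ.
Weyl group elements are encoded as in Statement 0: `w` together with a
permutation `σw` of the positive roots and signs `sw α = ±1` with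
`⟨w λ, (σw α)^∨⟩ = sw α ⟨λ, α^∨⟩`; then {α ∈ R⁺ : wα ∈ R⁻} = {α : sw α = -1},
and the composite xy has permutation σx ∘ σy and sign α ↦ sx(σy α)·sy α.
The weight yν has integer pairings β ↦ sy(σy⁻¹β)·nν(σy⁻¹β).
-/

open Finset

def abar (n : ℤ) : ℕ := if n < 0 then 1 else 0

noncomputable def Del {k V ι : Type*} [Field k] [AddCommGroup V] [Module k V]
    (c : ι → V →ₗ[k] k) (neg : Finset ι) (nν nμ : ι → ℤ) (ν μ τ : V) : k :=
  ∏ α ∈ neg,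
    ((c α τ) ^ abar (nν α) * (c α (τ + ν)) ^ abar (nμ α) *
        (c α (τ + ν + μ)) ^ abar (nν α + nμ α)) /
      ((c α τ) ^ abar (nν α + nμ α) * (c α (τ + ν)) ^ abar (nν α) *
        (c α (τ + ν + μ)) ^ abar (nμ α))

lemma abar_key {k : Type*} [Field k] (x : k) (m : ℤ) :
    x ^ abar (-m) * x ^ abar m = if m = 0 then 1 else x := by
  unfold abar
  split_ifs <;> first | omega | ring

lemma cross_id {k : Type*} [Field k] (a b d : k) (n1 n2 : ℤ)
    (hab : b = a + (n1 : k)) (hbd : d = b + (n2 : k)) :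
    a ^ abar (-n1) * b ^ abar (-n2) * d ^ abar (-(n1+n2)) *
      (a ^ abar n1 * b ^ abar n2 * d ^ abar (n1+n2)) =
    a ^ abar (n1+n2) * b ^ abar n1 * d ^ abar n2 *
      (a ^ abar (-(n1+n2)) * b ^ abar (-n1) * d ^ abar (-n2)) := by
  have key := abar_key (k := k)
  have e1 : a ^ abar (-n1) * b ^ abar (-n2) * d ^ abar (-(n1+n2)) *
      (a ^ abar n1 * b ^ abar n2 * d ^ abar (n1+n2)) =
      (if n1 = 0 then 1 else a) * (if n2 = 0 then 1 else b) * (if n1 + n2 = 0 then 1 else d) := by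
    rw [← key a n1, ← key b n2, ← key d (n1+n2)]; ring
  have e2 : a ^ abar (n1+n2) * b ^ abar n1 * d ^ abar n2 *
      (a ^ abar (-(n1+n2)) * b ^ abar (-n1) * d ^ abar (-n2)) =
      (if n1 + n2 = 0 then 1 else a) * (if n1 = 0 then 1 else b) * (if n2 = 0 then 1 else d) := by
    rw [← key a (n1+n2), ← key b n1, ← key d n2]; ring
  rw [e1, e2]
  by_cases h1 : n1 = 0
  · have hba : b = a := by rw [hab, h1]; push_cast; ring
    simp [h1, hba]
  by_cases h2 : n2 = 0
  · have hdb : d = b := by rw [hbd, h2]; push_cast; ring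
    simp [h2, hdb, mul_comm, mul_left_comm]
  by_cases h12 : n1 + n2 = 0
  · have hda : d = a := by rw [hbd, hab, show (n2:ℤ) = -n1 by omega]; push_cast; ring
    simp [h1, h2, h12, hda, mul_comm, mul_left_comm]
  · simp [h1, h2, h12, mul_comm, mul_left_comm]

lemma twist {k : Type*} [Field k] (s : ℤ) (hs : s = 1 ∨ s = -1) (a b d : k)
    (ha : a ≠ 0) (hb : b ≠ 0) (hd : d ≠ 0) (n1 n2 : ℤ)
    (hab : b = a + (n1 : k)) (hbd : d = b + (n2 : k)) :
    ((s : k) * a) ^ abar (s * n1) * ((s : k) * b) ^ abar (s * n2) *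
        ((s : k) * d) ^ abar (s * n1 + s * n2) /
      (((s : k) * a) ^ abar (s * n1 + s * n2) * ((s : k) * b) ^ abar (s * n1) *
        ((s : k) * d) ^ abar (s * n2)) =
    (a ^ abar n1 * b ^ abar n2 * d ^ abar (n1 + n2) /
      (a ^ abar (n1 + n2) * b ^ abar n1 * d ^ abar n2)) ^ s := by
  rcases hs with rfl | rfl
  · push_cast
    simp
  · simp only [Int.cast_neg, Int.cast_one, neg_one_mul, neg_mul, one_mul, ← neg_add]
    rw [zpow_neg, zpow_one, inv_div]
    set E := abar (-n1) + abar (-n2) + abar (-(n1+n2)) with hE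
    have hsgn : ((-1 : k)) ^ E ≠ 0 := pow_ne_zero _ (by norm_num)
    have h3 : (-a) ^ abar (-n1) * (-b) ^ abar (-n2) * (-d) ^ abar (-(n1+n2)) =
        (-1 : k) ^ E * (a ^ abar (-n1) * b ^ abar (-n2) * d ^ abar (-(n1+n2))) := by
      rw [hE, neg_pow, neg_pow, neg_pow, pow_add, pow_add]; ring
    have h4 : (-a) ^ abar (-(n1+n2)) * (-b) ^ abar (-n1) * (-d) ^ abar (-n2) =
        (-1 : k) ^ E * (a ^ abar (-(n1+n2)) * b ^ abar (-n1) * d ^ abar (-n2)) := by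
      rw [hE, neg_pow, neg_pow, neg_pow, pow_add, pow_add]; ring
    rw [h3, h4, mul_div_mul_left _ _ hsgn]
    rw [div_eq_div_iff
      (by exact mul_ne_zero (mul_ne_zero (pow_ne_zero _ ha) (pow_ne_zero _ hb)) (pow_ne_zero _ hd))
      (by exact mul_ne_zero (mul_ne_zero (pow_ne_zero _ ha) (pow_ne_zero _ hb)) (pow_ne_zero _ hd))]
    linear_combination cross_id a b d n1 n2 hab hbd

theorem stmt10 {k V ι : Type*} [Field k] [CharZero k] [AddCommGroup V] [Module k V]
    [Fintype ι] [DecidableEq ι]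
    (c : ι → V →ₗ[k] k) (ρ ν μ : V) (nν nμ nρ' : ι → ℤ)
    (hν : ∀ α, c α ν = (nν α : k)) (hμ : ∀ α, c α μ = (nμ α : k))
    (hρ : ∀ α, c α ρ = (nρ' α : k))
    (x y : V ≃ₗ[k] V) (σx σy : Equiv.Perm ι) (sx sy : ι → ℤ)
    (hsx : ∀ α, sx α = 1 ∨ sx α = -1) (hsy : ∀ α, sy α = 1 ∨ sy α = -1)
    (hx : ∀ (α : ι) (l : V), c (σx α) (x l) = (sx α : k) * c α l)
    (hy : ∀ (α : ι) (l : V), c (σy α) (y l) = (sy α : k) * c α l)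
    (τ : V)
    -- genericity: ⟨τ,α^∨⟩ ∉ ℤ for all roots α
    (hgen : ∀ α, ∀ n : ℤ, c α τ ≠ (n : k)) :
    Del c (Finset.univ.filter fun α => sx α = -1)
        (fun β => sy (σy.symm β) * nν (σy.symm β))
        (fun β => sy (σy.symm β) * nμ (σy.symm β))
        (y ν) (y μ) (y (τ + ρ)) =
      (Del c (Finset.univ.filter fun α => sy α = -1) nν nμ ν μ (τ + ρ))⁻¹ *
        Del c (Finset.univ.filter fun α => sx (σy α) * sy α = -1) nν nμ ν μ (τ + ρ) := by
  set T := τ + ρ with hT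
  -- nonvanishing of the three linear values
  have haT : ∀ β, c β T ≠ 0 := by
    intro β h
    rw [hT, map_add, hρ] at h
    refine hgen β (-nρ' β) ?_
    push_cast
    linear_combination h
  have hbT : ∀ β, c β (T + ν) ≠ 0 := by
    intro β h
    rw [hT, map_add, map_add, hρ, hν] at h
    refine hgen β (-(nρ' β + nν β)) ?_
    push_cast
    linear_combination h
  have hdT : ∀ β, c β (T + ν + μ) ≠ 0 := by
    intro β h
    rw [hT, map_add, map_add, map_add, hρ, hν, hμ] at h
    refine hgen β (-(nρ' β + nν β + nμ β)) ?_
    push_cast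
    linear_combination h
  -- the basic factor
  set f : ι → k := fun β =>
    c β T ^ abar (nν β) * c β (T + ν) ^ abar (nμ β) * c β (T + ν + μ) ^ abar (nν β + nμ β) /
      (c β T ^ abar (nν β + nμ β) * c β (T + ν) ^ abar (nν β) * c β (T + ν + μ) ^ abar (nμ β))
    with hf_def
  have hf : ∀ β, f β ≠ 0 := by
    intro β
    exact div_ne_zero
      (mul_ne_zero (mul_ne_zero (pow_ne_zero _ (haT β)) (pow_ne_zero _ (hbT β)))
        (pow_ne_zero _ (hdT β)))
      (mul_ne_zero (mul_ne_zero (pow_ne_zero _ (haT β)) (pow_ne_zero _ (hbT β)))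
        (pow_ne_zero _ (hdT β)))
  -- Step 1: rewrite the LHS as a product of f β ^ (sy β)
  have hLHS : Del c (Finset.univ.filter fun α => sx α = -1)
      (fun β => sy (σy.symm β) * nν (σy.symm β))
      (fun β => sy (σy.symm β) * nμ (σy.symm β))
      (y ν) (y μ) (y T) =
      ∏ β ∈ Finset.univ.filter fun β => sx (σy β) = -1, f β ^ (sy β) := by
    simp only [Del]
    refine (Finset.prod_equiv σy (fun β => by simp) ?_).symm
    intro β _
    have h1 : c (σy β) (y T) = (sy β : k) * c β T := hy β T
    have h2 : c (σy β) (y T + y ν) = (sy β : k) * c β (T + ν) := by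
      rw [← map_add]; exact hy β (T + ν)
    have h3 : c (σy β) (y T + y ν + y μ) = (sy β : k) * c β (T + ν + μ) := by
      rw [← map_add, ← map_add]; exact hy β (T + ν + μ)
    simp only [Equiv.symm_apply_apply, h1, h2, h3]
    exact (twist (sy β) (hsy β) _ _ _ (haT β) (hbT β) (hdT β) (nν β) (nμ β)
      (by rw [map_add, hν]) (by rw [map_add, hμ])).symm
  rw [hLHS]
  -- Step 2: rewrite everything as products over univ of zpowers of f
  have hL : ∀ β : ι, (if sx (σy β) = -1 then f β ^ (sy β) else 1) =
      f β ^ (if sx (σy β) = -1 then sy β else 0) := by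
    intro β; split_ifs <;> simp
  have hR1 : ∀ β : ι, (if sy β = -1 then f β else 1)⁻¹ =
      f β ^ (if sy β = -1 then (-1 : ℤ) else 0) := by
    intro β; split_ifs <;> simp
  have hR2 : ∀ β : ι, (if sx (σy β) * sy β = -1 then f β else 1) =
      f β ^ (if sx (σy β) * sy β = -1 then (1 : ℤ) else 0) := by
    intro β; split_ifs <;> simp
  simp only [Del]
  rw [Finset.prod_filter, Finset.prod_filter, Finset.prod_filter]
  show (∏ β : ι, if sx (σy β) = -1 then f β ^ (sy β) else 1) =
      (∏ β : ι, if sy β = -1 then f β else 1)⁻¹ *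
        ∏ β : ι, if sx (σy β) * sy β = -1 then f β else 1
  rw [← Finset.prod_inv_distrib, ← Finset.prod_mul_distrib]
  calc (∏ β : ι, if sx (σy β) = -1 then f β ^ (sy β) else 1)
      = ∏ β : ι, f β ^ ((if sx (σy β) = -1 then sy β else 0)) := by
        exact Finset.prod_congr rfl fun β _ => hL β
    _ = ∏ β : ι, f β ^ ((if sy β = -1 then (-1 : ℤ) else 0) +
          (if sx (σy β) * sy β = -1 then (1 : ℤ) else 0)) := by
        refine Finset.prod_congr rfl fun β _ => ?_
        congr 1
        rcases hsx (σy β) with h | h <;> rcases hsy β with h' | h' <;>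
          simp [h, h']
    _ = ∏ β : ι, ((if sy β = -1 then f β else 1)⁻¹ *
          (if sx (σy β) * sy β = -1 then f β else 1)) := by
        refine Finset.prod_congr rfl fun β _ => ?_
        rw [hR1 β, hR2 β, ← zpow_add₀ (hf β)]
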